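/- Let n ≥ k ≥ 1 and let U, V ∈ ℝ^{n×k} have orthonormal columns, i.e. UᵀU = I_k and VᵀV = I_k. Then there exists an orthogonal k×k matrix R (RᵀR = I_k) such that ‖U − V·R‖_F² ≤ 2·(k − ‖Vᵀ·U‖_F²). -/

import Mathlib

open Matrix BigOperators

-- helper: dot products
lemma dot_transpose_mul {a b : Type*} [Fintype a] [Fintype b]
    (A : Matrix a b ℝ) (x y : b → ℝ) :
    x ⬝ᵥ ((Aᵀ * A) *ᵥ y) = (A *ᵥ x) ⬝ᵥ (A *ᵥ y) := by
  rw [← Matrix.mulVec_mulVec, Matrix.dotProduct_mulVec, Matrix.vecMul_transpose]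

lemma dot_self_nonneg {a : Type*} [Fintype a] (x : a → ℝ) : 0 ≤ x ⬝ᵥ x :=
  Finset.sum_nonneg fun i _ => mul_self_nonneg _

lemma conjT_eq_T {a b : Type*} (A : Matrix a b ℝ) : Aᴴ = Aᵀ := by
  ext i j; simp [Matrix.conjTranspose_apply]

lemma frob_eq_trace {a b : Type*} [Fintype a] [Fintype b] (A : Matrix a b ℝ) :
    ∑ i, ∑ j, (A i j) ^ 2 = (Aᵀ * A).trace := by
  rw [Matrix.trace, Finset.sum_comm]
  simp [Matrix.mul_apply, Matrix.diag, sq]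

-- trace inequality for PSD P with P² ≼ 1
lemma trace_sq_le_trace {k : ℕ} (P : Matrix (Fin k) (Fin k) ℝ)
    (hP : P.PosSemidef) (h1 : (1 - P * P).PosSemidef) :
    (P * P).trace ≤ P.trace := by
  classical
  have hH := hP.1
  set W : Matrix (Fin k) (Fin k) ℝ := (hH.eigenvectorUnitary : Matrix (Fin k) (Fin k) ℝ) with hWdef
  have hWW : star W * W = 1 := Matrix.mem_unitaryGroup_iff'.mp hH.eigenvectorUnitary.2
  set D : Matrix (Fin k) (Fin k) ℝ := Matrix.diagonal (RCLike.ofReal ∘ hH.eigenvalues) with hDdef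
  have hPs : P = W * D * star W := hH.spectral_theorem
  have htrP : P.trace = ∑ i, hH.eigenvalues i := by
    conv_lhs => rw [hPs]
    rw [ Matrix.trace_mul_cycle, hWW, Matrix.one_mul, hDdef,
      Matrix.trace_diagonal]
    simp
  have hPP : P * P = W * (D * D) * star W := by
    rw [hPs]
    calc W * D * star W * (W * D * star W)
        = W * D * (star W * W) * (D * star W) := by
          simp only [Matrix.mul_assoc]
      _ = W * (D * D) * star W := by rw [hWW]; simp only [Matrix.mul_one, Matrix.mul_assoc]
  have htrPP : (P * P).trace = ∑ i, (hH.eigenvalues i) ^ 2 := by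
    conv_lhs => rw [hPP]
    rw [ Matrix.trace_mul_cycle, hWW, Matrix.one_mul, hDdef,
      Matrix.diagonal_mul_diagonal, Matrix.trace_diagonal]
    simp [sq]
  rw [htrP, htrPP]
  refine Finset.sum_le_sum fun i _ => ?_
  have h0 : 0 ≤ hH.eigenvalues i := hP.eigenvalues_nonneg i
  -- eigenvalue at most 1
  set v : Fin k → ℝ := ⇑(hH.eigenvectorBasis i) with hv
  have hPv : P *ᵥ v = hH.eigenvalues i • v := hH.mulVec_eigenvectorBasis i
  have hPPv : (P * P) *ᵥ v = (hH.eigenvalues i ^ 2) • v := by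
    rw [← Matrix.mulVec_mulVec, hPv, Matrix.mulVec_smul, hPv, smul_smul, sq]
  have hvv : v ⬝ᵥ v = 1 := by
    have hnorm : ‖hH.eigenvectorBasis i‖ = 1 := hH.eigenvectorBasis.orthonormal.1 i
    have : (v ⬝ᵥ v) = ‖hH.eigenvectorBasis i‖ ^ 2 := by
      rw [← real_inner_self_eq_norm_sq]
      rfl
    rw [this, hnorm, one_pow]
  have hle := h1.dotProduct_mulVec_nonneg v
  rw [Matrix.sub_mulVec, Matrix.one_mulVec, hPPv, star_trivial, dotProduct_sub,
    dotProduct_smul, hvv, smul_eq_mul, mul_one] at hle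
  nlinarith

set_option maxHeartbeats 1000000 in
lemma exists_orth_factor {k : ℕ} (M P : Matrix (Fin k) (Fin k) ℝ)
    (h : ∀ x : Fin k → ℝ, (M *ᵥ x) ⬝ᵥ (M *ᵥ x) = (P *ᵥ x) ⬝ᵥ (P *ᵥ x)) :
    ∃ R : Matrix (Fin k) (Fin k) ℝ, Rᵀ * R = 1 ∧ M = R * P := by
  classical
  let E := EuclideanSpace ℝ (Fin k)
  let p : E →ₗ[ℝ] E := Matrix.toEuclideanLin P
  let m : E →ₗ[ℝ] E := Matrix.toEuclideanLin M
  have hdot : ∀ (A : Matrix (Fin k) (Fin k) ℝ) (v : Fin k → ℝ),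
      ‖(Matrix.toEuclideanLin A) ((WithLp.equiv 2 (Fin k → ℝ)).symm v)‖ ^ 2
        = (A *ᵥ v) ⬝ᵥ (A *ᵥ v) := by
    intro A v
    rw [← real_inner_self_eq_norm_sq, WithLp.equiv_symm_apply,
      Matrix.toEuclideanLin_apply_piLp_toLp, EuclideanSpace.inner_toLp_toLp]
    simp [dotProduct]
  have hnorm : ∀ x : E, ‖m x‖ = ‖p x‖ := by
    intro x
    have hx : x = (WithLp.equiv 2 (Fin k → ℝ)).symm ((WithLp.equiv 2 (Fin k → ℝ)) x) :=
      (Equiv.symm_apply_apply _ _).symm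
    rw [← Real.sqrt_sq (norm_nonneg (m x)), ← Real.sqrt_sq (norm_nonneg (p x))]
    rw [hx]
    show Real.sqrt (‖(Matrix.toEuclideanLin M) _‖^2) = Real.sqrt (‖(Matrix.toEuclideanLin P) _‖^2)
    rw [hdot, hdot, h]
  have hker : LinearMap.ker p ≤ LinearMap.ker m := by
    intro x hx
    rw [LinearMap.mem_ker] at hx ⊢
    have := hnorm x
    rw [hx, norm_zero, norm_eq_zero] at this
    exact this
  let S : Submodule ℝ E := LinearMap.range p
  let e : (E ⧸ LinearMap.ker p) ≃ₗ[ℝ] S := p.quotKerEquivRange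
  let f1 : (E ⧸ LinearMap.ker p) →ₗ[ℝ] E := (LinearMap.ker p).liftQ m hker
  let L0 : S →ₗ[ℝ] E := f1 ∘ₗ (e.symm : S →ₗ[ℝ] (E ⧸ LinearMap.ker p))
  have hL0 : ∀ (x : E), L0 ⟨p x, LinearMap.mem_range_self p x⟩ = m x := by
    intro x
    have he : e (Submodule.Quotient.mk x) = ⟨p x, LinearMap.mem_range_self p x⟩ := rfl
    have h2 : e.symm ⟨p x, LinearMap.mem_range_self p x⟩ = Submodule.Quotient.mk x := by
      rw [← he, LinearEquiv.symm_apply_apply]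
    simp only [L0, LinearMap.comp_apply, LinearEquiv.coe_coe, h2, f1]
    exact Submodule.liftQ_apply _ _ _
  have hiso : ∀ s : S, ‖L0 s‖ = ‖s‖ := by
    rintro ⟨-, x, rfl⟩
    rw [hL0 x, hnorm x]
    rfl
  let L : S →ₗᵢ[ℝ] E := ⟨L0, hiso⟩
  let R' : E →ₗᵢ[ℝ] E := L.extend
  have hR'p : ∀ x : E, R' (p x) = m x := by
    intro x
    have h1 : R' ((⟨p x, LinearMap.mem_range_self p x⟩ : S) : E)
        = L ⟨p x, LinearMap.mem_range_self p x⟩ := L.extend_apply _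
    exact h1.trans (hL0 x)
  let R : Matrix (Fin k) (Fin k) ℝ := Matrix.toEuclideanLin.symm R'.toLinearMap
  have hRlin : Matrix.toEuclideanLin R = R'.toLinearMap := Matrix.toEuclideanLin.apply_symm_apply _
  have hR' : ∀ v : Fin k → ℝ, R' ((WithLp.equiv 2 (Fin k → ℝ)).symm v)
      = (WithLp.equiv 2 (Fin k → ℝ)).symm (R *ᵥ v) := by
    intro v
    have := Matrix.toEuclideanLin_apply_piLp_toLp (𝕜 := ℝ) R v
    rw [hRlin] at this
    exact this
  have hRdot : ∀ x y : Fin k → ℝ, (R *ᵥ x) ⬝ᵥ (R *ᵥ y) = x ⬝ᵥ y := by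
    intro x y
    have hinner := R'.inner_map_map ((WithLp.equiv 2 (Fin k → ℝ)).symm x)
      ((WithLp.equiv 2 (Fin k → ℝ)).symm y)
    rw [hR', hR', WithLp.equiv_symm_apply, EuclideanSpace.inner_toLp_toLp,
      EuclideanSpace.inner_toLp_toLp] at hinner
    simpa [dotProduct_comm (R *ᵥ y), dotProduct_comm y] using hinner
  have hRorth : Rᵀ * R = 1 := by
    ext i j
    have := hRdot (Pi.single i 1) (Pi.single j 1)
    simpa [Matrix.mul_apply, Matrix.mulVec_single, dotProduct, Pi.single_apply,
      Matrix.one_apply, eq_comm] using this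
  refine ⟨R, hRorth, ?_⟩
  have key : ∀ v : Fin k → ℝ, M *ᵥ v = R *ᵥ (P *ᵥ v) := by
    intro v
    have h1 := hR'p ((WithLp.equiv 2 (Fin k → ℝ)).symm v)
    have hm : m ((WithLp.equiv 2 (Fin k → ℝ)).symm v)
        = (WithLp.equiv 2 (Fin k → ℝ)).symm (M *ᵥ v) :=
      Matrix.toEuclideanLin_apply_piLp_toLp (𝕜 := ℝ) M v
    have hp : p ((WithLp.equiv 2 (Fin k → ℝ)).symm v)
        = (WithLp.equiv 2 (Fin k → ℝ)).symm (P *ᵥ v) :=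
      Matrix.toEuclideanLin_apply_piLp_toLp (𝕜 := ℝ) P v
    rw [hm, hp, hR'] at h1
    exact ((WithLp.equiv 2 (Fin k → ℝ)).symm.injective h1).symm
  ext i j
  have := congrFun (key (Pi.single j 1)) i
  simpa [Matrix.mulVec_single, Matrix.mul_apply, Matrix.mulVec, dotProduct,
    Pi.single_apply, mul_ite, Finset.sum_ite_eq', eq_comm] using this

open scoped MatrixOrder in
lemma psd_sqrt_exists {k : ℕ} (A : Matrix (Fin k) (Fin k) ℝ) (hA : A.PosSemidef) :
    ∃ P : Matrix (Fin k) (Fin k) ℝ, P.PosSemidef ∧ P * P = A :=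
  ⟨CFC.sqrt A, (CFC.sqrt_nonneg A).posSemidef, CFC.sqrt_mul_sqrt_self A hA.nonneg⟩

/-- **Procrustes alignment bound.**
Let `n ≥ k ≥ 1` and let `U, V ∈ ℝ^{n×k}` have orthonormal columns.  Then there exists an
orthogonal `k × k` matrix `R` such that `‖U − V·R‖_F² ≤ 2·(k − ‖Vᵀ·U‖_F²)`. -/
theorem procrustes_alignment_bound
    (n k : ℕ) (hk : 1 ≤ k) (hkn : k ≤ n)
    (U V : Matrix (Fin n) (Fin k) ℝ)
    (hU : Uᵀ * U = 1)
    (hV : Vᵀ * V = 1) :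
    ∃ R : Matrix (Fin k) (Fin k) ℝ, Rᵀ * R = 1 ∧
      ∑ i, ∑ j, ((U - V * R) i j) ^ 2 ≤
        2 * ((k : ℝ) - ∑ i, ∑ j, ((Vᵀ * U) i j) ^ 2) := by
  classical
  set M : Matrix (Fin k) (Fin k) ℝ := Vᵀ * U with hM
  have hMM : (Mᵀ * M).PosSemidef := by
    have := Matrix.posSemidef_conjTranspose_mul_self M
    rwa [conjT_eq_T] at this
  obtain ⟨P, hPsd, hPP⟩ := psd_sqrt_exists (Mᵀ * M) hMM
  have hPT : Pᵀ = P := by rw [← conjT_eq_T]; exact hPsd.1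
  -- key dot product identity: M and P have the same "Gram" structure
  have hgram : ∀ x : Fin k → ℝ, (M *ᵥ x) ⬝ᵥ (M *ᵥ x) = (P *ᵥ x) ⬝ᵥ (P *ᵥ x) := by
    intro x
    rw [← dot_transpose_mul M x x, ← dot_transpose_mul P x x, hPT, hPP]
  obtain ⟨R, hRorth, hMRP⟩ := exists_orth_factor M P hgram
  refine ⟨R, hRorth, ?_⟩
  -- (1 - P*P) is PSD
  have h1 : (1 - P * P).PosSemidef := by
    rw [hPP]
    refine Matrix.PosSemidef.of_dotProduct_mulVec_nonneg ?_ ?_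
    · have : (1 - Mᵀ * M)ᴴ = 1 - Mᵀ * M := by
        rw [conjT_eq_T, Matrix.transpose_sub, Matrix.transpose_one, Matrix.transpose_mul,
          Matrix.transpose_transpose]
      exact this
    · intro x
      rw [star_trivial, Matrix.sub_mulVec, Matrix.one_mulVec, dotProduct_sub,
        dot_transpose_mul]
      have hMx : M *ᵥ x = Vᵀ *ᵥ (U *ᵥ x) := by rw [hM, ← Matrix.mulVec_mulVec]
      set y : Fin n → ℝ := U *ᵥ x with hy
      set w : Fin k → ℝ := Vᵀ *ᵥ y with hw
      have hxx : x ⬝ᵥ x = y ⬝ᵥ y := by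
        rw [hy, ← dot_transpose_mul U x x, hU, Matrix.one_mulVec]
      have hVw : (V *ᵥ w) ⬝ᵥ (V *ᵥ w) = w ⬝ᵥ w := by
        rw [← dot_transpose_mul V w w, hV, Matrix.one_mulVec]
      have hyVw : y ⬝ᵥ (V *ᵥ w) = w ⬝ᵥ w := by
        rw [Matrix.dotProduct_mulVec, ← Matrix.mulVec_transpose, ← hw]
      have hz := dot_self_nonneg (y - V *ᵥ w)
      rw [dotProduct_sub, sub_dotProduct, sub_dotProduct] at hz
      have hcomm : (V *ᵥ w) ⬝ᵥ y = y ⬝ᵥ (V *ᵥ w) := dotProduct_comm _ _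
      rw [hcomm, hyVw, hVw] at hz
      rw [hMx, hxx]
      linarith
  have htr := trace_sq_le_trace P hPsd h1
  -- compute the Frobenius norms via traces
  have hUVR : ((U - V * R)ᵀ * (U - V * R)).trace = 2 * k - 2 * P.trace := by
    have hexp : (U - V * R)ᵀ * (U - V * R)
        = Uᵀ * U - Uᵀ * (V * R) - (V * R)ᵀ * U + (V * R)ᵀ * (V * R) := by
      rw [Matrix.transpose_sub, Matrix.sub_mul, Matrix.mul_sub, Matrix.mul_sub]
      abel
    have e1 : (Uᵀ * U).trace = (k : ℝ) := by rw [hU, Matrix.trace_one]; simp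
    have e4 : ((V * R)ᵀ * (V * R)).trace = (k : ℝ) := by
      rw [Matrix.transpose_mul]
      have : Rᵀ * Vᵀ * (V * R) = Rᵀ * R := by
        rw [Matrix.mul_assoc, ← Matrix.mul_assoc Vᵀ V R, hV, Matrix.one_mul]
      rw [this, hRorth, Matrix.trace_one]; simp
    have e3 : ((V * R)ᵀ * U).trace = P.trace := by
      rw [Matrix.transpose_mul, Matrix.mul_assoc, ← hM, hMRP, ← Matrix.mul_assoc, hRorth,
        Matrix.one_mul]
    have e2 : (Uᵀ * (V * R)).trace = P.trace := by
      have : (Uᵀ * (V * R))ᵀ = (V * R)ᵀ * U := by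
        rw [Matrix.transpose_mul, Matrix.transpose_transpose]
      rw [← Matrix.trace_transpose, this, e3]
    rw [hexp, Matrix.trace_add, Matrix.trace_sub, Matrix.trace_sub, e1, e2, e3, e4]
    ring
  have hMtr : (Mᵀ * M).trace = (P * P).trace := by rw [hPP]
  rw [frob_eq_trace, frob_eq_trace, hUVR, hMtr]
  linarith
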